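/- The function Φ(x,y) = (1/y)·(y − 1 − x²)·(1 − ((x+1)/2)·((y−1)/y)) − ((1−x)(y−1))/(2(y−x²))·(1 + 1/y) is nonnegative for all (x,y) ∈ [0,1] × [3,∞). -/
import Mathlib

/-- The function `Φ(x,y)` from Lemma 2.1. -/
noncomputable def PhiFun (x y : ℝ) : ℝ :=
  1 / y * (y - 1 - x ^ 2) * (1 - (x + 1) / 2 * ((y - 1) / y)) -
    (1 - x) * (y - 1) / (2 * (y - x ^ 2)) * (1 + 1 / y)

theorem Phi_nonneg : ∀ x y : ℝ, x ∈ Set.Icc (0 : ℝ) 1 → y ∈ Set.Ici (3 : ℝ) →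
    0 ≤ PhiFun x y := by
  rintro x y ⟨hx0, hx1⟩ hy
  simp only [Set.mem_Ici] at hy
  have hy0 : (0:ℝ) < y := by linarith
  have hx2 : x ^ 2 ≤ 1 := by nlinarith
  have hyx : (0:ℝ) < y - x ^ 2 := by nlinarith
  have key : PhiFun x y =
      (x * (2*y^2*(1 - x + x^2) - y*(2 + x + 3*x^2 - x^3 + x^4)
        + (x + x^2 + x^3 + x^4))) / (2 * y^2 * (y - x^2)) := by
    unfold PhiFun
    field_simp
    ring
  rw [key]
  apply div_nonneg
  · apply mul_nonneg hx0
    nlinarith [mul_nonneg hx0 (sub_nonneg.2 hx1), sq_nonneg (1-x), sq_nonneg x,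
      mul_nonneg (mul_nonneg hx0 (sub_nonneg.2 hx1)) (by linarith : (0:ℝ) ≤ y - 3),
      sq_nonneg (y-3), mul_nonneg (sq_nonneg x) (sub_nonneg.2 hx1)]
  · positivity
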